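/- For n ≥ 4 and m = ⌊n/2⌋, if x ∈ ℝⁿ has exactly k coordinates equal to r and n−k coordinates equal to s (r ≠ s, 0 ≤ k ≤ n), then Lₙ(x) = k(n−k)(r−s)⁴·(m−k)(n−m−k), and this value is nonnegative. -/

import Mathlib

open Finset

/-- Closed-form evaluation of `Lₙ` on points with at most two distinct coordinates:
if `x` has exactly `k` coordinates equal to `r` and the remaining `n − k` equal to `s ≠ r`,
then `Lₙ(x) = k(n−k)(r−s)⁴(m−k)(n−m−k) ≥ 0`, where `m = ⌊n/2⌋`. -/
theorem stmt4 (n : ℕ) (hn : 4 ≤ n) (m : ℕ) (hm : m = n / 2)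
    (x : Fin n → ℝ) (r s : ℝ) (hrs : r ≠ s) (k : ℕ)
    (hx : ∀ i, x i = r ∨ x i = s)
    (hk : (univ.filter fun i => x i = r).card = k) :
    (m * (n - m) : ℝ) * (∑ i : Fin n, ∑ j ∈ Ioi i, (x i - x j) ^ 4) -
        (∑ i : Fin n, ∑ j ∈ Ioi i, (x i - x j) ^ 2) ^ 2 =
      (k : ℝ) * (n - k) * (r - s) ^ 4 * ((m : ℝ) - k) * ((n : ℝ) - m - k) ∧
    0 ≤ (k : ℝ) * (n - k) * (r - s) ^ 4 * ((m : ℝ) - k) * ((n : ℝ) - m - k) := by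
  have hkn : k ≤ n := by
    rw [← hk]
    exact le_trans (card_filter_le _ _) (le_of_eq (by simp))
  have htot := Finset.card_filter_add_card_filter_not
    (s := (univ : Finset (Fin n))) (p := fun i => x i = r)
  simp only [card_univ, Fintype.card_fin] at htot
  have hAc : (univ.filter fun i => ¬ x i = r).card = n - k := by omega
  -- power-sum evaluation
  have hsum : ∀ g : ℝ → ℝ, ∑ i, g (x i) = (k : ℝ) * g r + ((n : ℝ) - k) * g s := by
    intro g
    rw [← sum_filter_add_sum_filter_not univ (fun i => x i = r)]
    rw [sum_congr rfl (fun i hi => by rw [(mem_filter.mp hi).2] : ∀ i ∈ univ.filter fun i => x i = r, g (x i) = g r)]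
    rw [sum_congr rfl (fun i hi => by
      rw [(hx i).resolve_left (mem_filter.mp hi).2] :
      ∀ i ∈ univ.filter fun i => ¬ x i = r, g (x i) = g s)]
    rw [sum_const, sum_const, hk, hAc, nsmul_eq_mul, nsmul_eq_mul,
      Nat.cast_sub hkn]
  -- halving lemma
  have half : ∀ f : Fin n → Fin n → ℝ, (∀ i j, f j i = f i j) → (∀ i, f i i = 0) →
      ∑ i, ∑ j, f i j = 2 * ∑ i, ∑ j ∈ Ioi i, f i j := by
    intro f hs hd
    have hIoi : ∀ i : Fin n, Ioi i = univ.filter (fun j => i < j) := by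
      intro i; ext j; simp
    have hIio : ∀ i : Fin n, Iio i = univ.filter (fun j => j < i) := by
      intro i; ext j; simp
    have h1 : ∀ i : Fin n, ∑ j, f i j = ∑ j ∈ Ioi i, f i j + ∑ j ∈ Iio i, f i j := by
      intro i
      rw [hIoi, hIio, sum_filter, sum_filter, ← sum_add_distrib]
      apply sum_congr rfl
      intro j _
      rcases lt_trichotomy i j with h | h | h
      · simp [h, not_lt_of_gt h]
      · subst h; simp [hd]
      · simp [h, not_lt_of_gt h]
    have h2 : ∑ i, ∑ j ∈ Iio i, f i j = ∑ i, ∑ j ∈ Ioi i, f i j := by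
      simp_rw [hIoi, hIio, sum_filter]
      rw [sum_comm]
      apply sum_congr rfl; intro i _; apply sum_congr rfl; intro j _
      by_cases h : i < j <;> simp [h, hs]
    simp_rw [h1]
    rw [sum_add_distrib, h2]; ring
  -- double sums over all pairs
  have hD : ∀ p : ℕ, ∑ i, ∑ j, (x i - x j) ^ p =
      (k : ℝ) * ((k : ℝ) * (r - r) ^ p + ((n : ℝ) - k) * (r - s) ^ p) +
      ((n : ℝ) - k) * ((k : ℝ) * (s - r) ^ p + ((n : ℝ) - k) * (s - s) ^ p) := by
    intro p
    calc ∑ i, ∑ j, (x i - x j) ^ p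
        = ∑ i, ((k : ℝ) * (x i - r) ^ p + ((n : ℝ) - k) * (x i - s) ^ p) :=
          sum_congr rfl (fun i _ => hsum (fun y => (x i - y) ^ p))
      _ = _ := hsum (fun c => (k : ℝ) * (c - r) ^ p + ((n : ℝ) - k) * (c - s) ^ p)
  have e2 : ∑ i, ∑ j ∈ Ioi i, (x i - x j) ^ 2 = (k : ℝ) * ((n : ℝ) - k) * (r - s) ^ 2 := by
    have h := (half (fun i j => (x i - x j) ^ 2) (by intro i j; ring) (by intro i; ring)).symm.trans (hD 2)
    linear_combination h / 2
  have e4 : ∑ i, ∑ j ∈ Ioi i, (x i - x j) ^ 4 = (k : ℝ) * ((n : ℝ) - k) * (r - s) ^ 4 := by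
    have h := (half (fun i j => (x i - x j) ^ 4) (by intro i j; ring) (by intro i; ring)).symm.trans (hD 4)
    linear_combination h / 2
  constructor
  · rw [e2, e4]; ring
  · have hK : (0 : ℝ) ≤ (k : ℝ) := Nat.cast_nonneg k
    have hNK : (0 : ℝ) ≤ (n : ℝ) - k := by
      have := (Nat.cast_le (α := ℝ)).mpr hkn; linarith
    have h4 : (0 : ℝ) ≤ (r - s) ^ 4 := by positivity
    have ha : (0 : ℝ) ≤ (k : ℝ) * ((n : ℝ) - k) * (r - s) ^ 4 :=
      mul_nonneg (mul_nonneg hK hNK) h4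
    rcases le_or_gt k m with h | h
    · have h1 : (0 : ℝ) ≤ (m : ℝ) - k := by
        have := (Nat.cast_le (α := ℝ)).mpr h; linarith
      have h2 : (0 : ℝ) ≤ (n : ℝ) - m - k := by
        have hkm : k + m ≤ n := by omega
        have := (Nat.cast_le (α := ℝ)).mpr hkm; push_cast at this; linarith
      have := mul_nonneg ha (mul_nonneg h1 h2)
      nlinarith [this]
    · have h1 : (m : ℝ) - k ≤ 0 := by
        have := (Nat.cast_le (α := ℝ)).mpr h.le; linarith
      have h2 : (n : ℝ) - m - k ≤ 0 := by
        have hkm : n ≤ k + m := by omega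
        have := (Nat.cast_le (α := ℝ)).mpr hkm; push_cast at this; linarith
      have := mul_nonneg ha ((by nlinarith [h1, h2] : (0:ℝ) ≤ ((m : ℝ) - k) * ((n : ℝ) - m - k)))
      nlinarith [this]
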